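/- Let A ⊆ B be subsets of [n]. Then the number of full chains in B_n that intersect the interval [A, B] = {S : A ⊆ S ⊆ B} equals n! / C(n − |B \ A|, |A|). -/

import Mathlib

set_option linter.unusedSectionVars false
set_option linter.unusedVariables false

/-- A full (maximal) chain in `B_n`, recorded as the function assigning to each
`i ∈ {0, …, n}` the subset of size `i` belonging to the chain. -/
def IsFullChain {n : ℕ} (c : Fin (n+1) → Finset (Fin n)) : Prop :=
  (∀ i : Fin (n+1), (c i).card = (i : ℕ)) ∧ ∀ i j : Fin (n+1), i ≤ j → c i ⊆ c j

open scoped Classical in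
/-- The number of full chains of `B_n` that contain at least one member of `F`. -/
noncomputable def chainCount {n : ℕ} (F : Finset (Finset (Fin n))) : ℕ :=
  (Finset.univ.filter (fun c : Fin (n+1) → Finset (Fin n) =>
    IsFullChain c ∧ ∃ i, c i ∈ F)).card

open Finset

lemma card_filter_val_lt (n i : ℕ) (h : i ≤ n) :
    (univ.filter fun j : Fin n => (j:ℕ) < i).card = i := by
  rw [show (univ.filter fun j : Fin n => (j:ℕ) < i) = (univ : Finset (Fin i)).map (Fin.castLEEmb h) by
    ext j
    simp only [mem_filter, mem_univ, true_and, mem_map]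
    constructor
    · intro hj; exact ⟨⟨j, hj⟩, rfl⟩
    · rintro ⟨k, rfl⟩; exact k.isLt]
  simp

def toChain {n : ℕ} (τ : Equiv.Perm (Fin n)) (i : Fin (n+1)) : Finset (Fin n) :=
  univ.filter fun x => (τ x : ℕ) < (i : ℕ)

lemma isFullChain_toChain {n : ℕ} (τ : Equiv.Perm (Fin n)) : IsFullChain (toChain τ) := by
  constructor
  · intro i
    have : (toChain τ i) = (univ.filter fun j : Fin n => (j:ℕ) < i).map τ.symm.toEmbedding := by
      ext x
      simp only [toChain, mem_filter, mem_univ, true_and, mem_map, Equiv.coe_toEmbedding]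
      constructor
      · intro hx; exact ⟨τ x, hx, by simp⟩
      · rintro ⟨j, hj, rfl⟩; simpa using hj
    rw [this, card_map, card_filter_val_lt n i (by omega)]
  · intro i j hij x hx
    simp only [toChain, mem_filter, mem_univ, true_and] at *
    exact lt_of_lt_of_le hx (by exact_mod_cast hij)

lemma toChain_injective {n : ℕ} : Function.Injective (toChain (n := n)) := by
  intro τ σ h
  ext x
  by_contra hne
  rcases lt_or_gt_of_ne (fun hc : τ x = σ x => hne (congrArg Fin.val hc)) with hlt | hlt
  · have hmem : x ∈ toChain τ ⟨((σ x : ℕ)), by omega⟩ := by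
      simp only [toChain, mem_filter, mem_univ, true_and]; exact hlt
    rw [h] at hmem
    simp [toChain] at hmem
  · have hmem : x ∈ toChain σ ⟨((τ x : ℕ)), by omega⟩ := by
      simp only [toChain, mem_filter, mem_univ, true_and]; exact hlt
    rw [← h] at hmem
    simp [toChain] at hmem

lemma toChain_surj {n : ℕ} (c : Fin (n+1) → Finset (Fin n)) (hc : IsFullChain c) :
    ∃ τ : Equiv.Perm (Fin n), toChain τ = c := by
  classical
  obtain ⟨hcard, hmono⟩ := hc
  set s : Fin n → ℕ := fun x => (univ.filter fun i : Fin (n+1) => x ∉ c i).card with hs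
  have hc0 : c 0 = ∅ := by
    have := hcard 0
    simpa [Finset.card_eq_zero] using this
  have hclast : c (Fin.last n) = univ := by
    have := hcard (Fin.last n)
    apply Finset.eq_univ_of_card
    simpa using this
  have hnotmem_iff : ∀ (x : Fin n) (i : Fin (n+1)), x ∉ c i ↔ (i : ℕ) < s x := by
    intro x i
    constructor
    · intro hx
      have hsub : (univ.filter fun j : Fin (n+1) => (j:ℕ) < (i:ℕ)+1) ⊆
          (univ.filter fun j : Fin (n+1) => x ∉ c j) := by
        intro j hj
        simp only [mem_filter, mem_univ, true_and] at *
        intro hxj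
        exact hx (hmono j i (by omega : (j:ℕ) ≤ (i:ℕ)) hxj)
      have := Finset.card_le_card hsub
      rwa [card_filter_val_lt (n+1) ((i:ℕ)+1) (by omega)] at this
    · intro hi hx
      have hsub : (univ.filter fun j : Fin (n+1) => x ∉ c j) ⊆
          (univ.filter fun j : Fin (n+1) => (j:ℕ) < (i:ℕ)) := by
        intro j hj
        simp only [mem_filter, mem_univ, true_and] at *
        by_contra hji
        exact hj (hmono i j (by omega : (i:ℕ) ≤ (j:ℕ)) hx)
      have := Finset.card_le_card hsub
      rw [card_filter_val_lt (n+1) (i:ℕ) (by omega)] at this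
      simp only [hs] at hi
      omega
  have hs1 : ∀ x, 1 ≤ s x := by
    intro x
    have hx : x ∉ c 0 := by simp [hc0]
    have := (hnotmem_iff x 0).mp hx
    simp at this; omega
  have hsn : ∀ x, s x ≤ n := by
    intro x
    have hx : x ∈ c (Fin.last n) := by rw [hclast]; exact mem_univ x
    have := (hnotmem_iff x (Fin.last n)).not.mp (by simpa using hx)
    simpa using this
  set p : Fin n → Fin n := fun x => ⟨s x - 1, by have := hs1 x; have := hsn x; omega⟩ with hp
  have hmem_iff : ∀ (x : Fin n) (i : Fin (n+1)), x ∈ c i ↔ (p x : ℕ) < (i : ℕ) := by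
    intro x i
    have h1 := hnotmem_iff x i
    have h2 := hs1 x
    constructor
    · intro hx
      have : ¬ ((i:ℕ) < s x) := fun h => (h1.mpr h) hx
      simp only [hp]; omega
    · intro hlt
      by_contra hx
      have := h1.mp hx
      simp only [hp] at hlt; omega
  have hinj : Function.Injective p := by
    intro x y hxy
    have hsxy : s x = s y := by
      have := congrArg Fin.val hxy
      simp only [hp] at this
      have := hs1 x; have := hs1 y
      omega
    set t := s x with ht
    have h1x : x ∈ c ⟨t, by have := hsn x; omega⟩ := by
      rw [hmem_iff]; simp [hp]; have := hs1 x; omega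
    have h1y : y ∈ c ⟨t, by have := hsn x; omega⟩ := by
      rw [hmem_iff]; simp [hp, ← hsxy]; have := hs1 x; omega
    have h2x : x ∉ c ⟨t-1, by have := hsn x; omega⟩ := by
      rw [hnotmem_iff]; simp; have := hs1 x; omega
    have h2y : y ∉ c ⟨t-1, by have := hsn x; omega⟩ := by
      rw [hnotmem_iff]; simp [← hsxy, ht]; have := hs1 x; omega
    have hsd : (c ⟨t, by have := hsn x; omega⟩ \ c ⟨t-1, by have := hsn x; omega⟩).card = 1 := by
      rw [Finset.card_sdiff_of_subset (hmono _ _ (by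
        rw [Fin.le_def]; simp only [Fin.val_mk]; omega))]
      rw [hcard, hcard]
      simp only [Fin.val_mk]
      have := hs1 x; omega
    obtain ⟨z, hz⟩ := Finset.card_eq_one.mp hsd
    have hxz : x = z := by
      have : x ∈ ({z} : Finset (Fin n)) := by rw [← hz]; simp [h1x, h2x]
      simpa using this
    have hyz : y = z := by
      have : y ∈ ({z} : Finset (Fin n)) := by rw [← hz]; simp [h1y, h2y]
      simpa using this
    rw [hxz, hyz]
  refine ⟨Equiv.ofBijective p (Finite.injective_iff_bijective.mp hinj), ?_⟩
  funext i
  ext x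
  simp only [toChain, mem_filter, mem_univ, true_and, Equiv.ofBijective_apply]
  exact (hmem_iff x i).symm


open scoped Classical in
lemma chainCount_eq_perm (n : ℕ) (A B : Finset (Fin n)) :
    chainCount (Finset.Icc A B) =
      (univ.filter fun τ : Equiv.Perm (Fin n) => ∀ a ∈ A, ∀ b ∈ Bᶜ, τ a < τ b).card := by
  rw [chainCount]
  symm
  apply Finset.card_bij (fun τ _ => toChain τ)
  · intro τ hτ
    simp only [mem_filter, mem_univ, true_and] at hτ ⊢
    refine ⟨isFullChain_toChain τ, ?_⟩
    set M : ℕ := A.sup (fun a => (τ a : ℕ) + 1) with hM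
    have hMn : M ≤ n := by
      apply Finset.sup_le
      intro a _
      exact (τ a).isLt
    refine ⟨⟨M, by omega⟩, ?_⟩
    rw [Finset.mem_Icc]
    constructor
    · intro a ha
      simp only [toChain, mem_filter, mem_univ, true_and]
      have : (τ a : ℕ) + 1 ≤ M := Finset.le_sup (f := fun a => (τ a : ℕ) + 1) ha
      simpa using by omega
    · intro x hx
      simp only [toChain, mem_filter, mem_univ, true_and] at hx
      by_contra hxB
      have hMx : M ≤ (τ x : ℕ) := by
        apply Finset.sup_le
        intro a ha
        have := hτ a ha x (by simpa using hxB)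
        rw [Fin.lt_def] at this
        omega
      have hx' : (τ x : ℕ) < M := hx
      omega
  · intro τ _ σ _ h
    exact toChain_injective h
  · intro c hc
    simp only [mem_filter, mem_univ, true_and] at hc
    obtain ⟨hfull, i, hi⟩ := hc
    obtain ⟨τ, hτ⟩ := toChain_surj c hfull
    refine ⟨τ, ?_, hτ⟩
    simp only [mem_filter, mem_univ, true_and]
    intro a ha b hb
    rw [Finset.mem_Icc] at hi
    have hmem : ∀ x : Fin n, x ∈ c i ↔ (τ x : ℕ) < (i : ℕ) := by
      intro x
      rw [← hτ]
      simp [toChain]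
    have h1 : (τ a : ℕ) < (i : ℕ) := (hmem a).mp (hi.1 ha)
    have h2 : ¬ ((τ b : ℕ) < (i : ℕ)) := fun h => (by simpa using hb : b ∉ B) (hi.2 ((hmem b).mpr h))
    rw [Fin.lt_def]
    omega

section Rank
variable {α : Type*} [LinearOrder α] [DecidableEq α]

def frank (W : Finset α) (x : α) : ℕ := (W.filter (· < x)).card

lemma frank_mono (W : Finset α) {u v : α} (h : u ≤ v) : frank W u ≤ frank W v :=
  Finset.card_le_card (Finset.monotone_filter_right W (fun x _ hx => lt_of_lt_of_le hx h))

lemma lt_of_frank_lt {W : Finset α} {u v : α} (h : frank W u < frank W v) : u < v := by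
  by_contra hc
  push_neg at hc
  exact absurd (frank_mono W hc) (by omega)

lemma frank_lt_frank {W : Finset α} {u v : α} (hu : u ∈ W) (huv : u < v) :
    frank W u < frank W v := by
  apply Finset.card_lt_card
  constructor
  · exact Finset.monotone_filter_right W (fun x _ hx => lt_trans hx huv)
  · intro hsub
    have : u ∈ W.filter (· < u) := hsub (by simp [hu, huv])
    simp at this

lemma frank_injOn {W : Finset α} : Set.InjOn (frank W) W := by
  intro u hu v hv h
  by_contra hne
  rcases lt_or_gt_of_ne hne with hlt | hlt
  · exact absurd (frank_lt_frank hu hlt) (by omega)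
  · exact absurd (frank_lt_frank hv hlt) (by omega)

lemma image_frank (W : Finset α) : W.image (frank W) = Finset.range W.card := by
  induction W using Finset.induction_on_max with
  | empty => simp
  | insert a s ha ih =>
    have hanotin : a ∉ s := fun h => lt_irrefl a (ha a h)
    have h1 : ∀ x ∈ s, frank (insert a s) x = frank s x := by
      intro x hx
      unfold frank
      congr 1
      rw [Finset.filter_insert, if_neg (by exact fun h => absurd (ha x hx) (by exact not_lt_of_gt h))]
    have h2 : frank (insert a s) a = s.card := by
      unfold frank
      rw [Finset.filter_insert, if_neg (lt_irrefl a)]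
      rw [Finset.filter_true_of_mem (fun x hx => ha x hx)]
    rw [Finset.image_insert, h2, Finset.image_congr (fun x hx => h1 x hx), ih,
      Finset.card_insert_of_notMem hanotin]
    rw [Finset.range_add_one]

lemma card_filter_frank_lt (W : Finset α) (a : ℕ) (h : a ≤ W.card) :
    (W.filter fun w => frank W w < a).card = a := by
  have himg : (W.filter fun w => frank W w < a).image (frank W) =
      (Finset.range W.card).filter (· < a) := by
    rw [← image_frank W, Finset.filter_image]
  have hinj : Set.InjOn (frank W) (W.filter fun w => frank W w < a) :=
    frank_injOn.mono (by intro x hx; exact Finset.mem_of_mem_filter x (by exact_mod_cast hx))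
  rw [← Finset.card_image_of_injOn hinj, himg]
  rw [show (Finset.range W.card).filter (· < a) = Finset.range a by
    ext x; simp; omega]
  simp

variable {n : ℕ}

/-- the canonical permutation mapping `A` onto `T` and `C` onto `(A ∪ C) \ T`,
fixing everything outside `A ∪ C`. -/
def piPermAux (A C T : Finset (Fin n)) (hAC : Disjoint A C) (hT : T.card = A.card)
    (hTS : T ⊆ A ∪ C) : Equiv.Perm (Fin n) := by
  have hST : ((A ∪ C) \ T).card = C.card := by
    rw [Finset.card_sdiff_of_subset hTS, Finset.card_union_of_disjoint hAC, hT]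
    omega
  exact
  { toFun := fun x =>
      if h : x ∈ A then (T.orderIsoOfFin hT ((A.orderIsoOfFin rfl).symm ⟨x, h⟩) : Fin n)
      else if h : x ∈ C then (((A ∪ C) \ T).orderIsoOfFin hST ((C.orderIsoOfFin rfl).symm ⟨x, h⟩) : Fin n)
      else x
    invFun := fun y =>
      if h : y ∈ T then ((A.orderIsoOfFin rfl) ((T.orderIsoOfFin hT).symm ⟨y, h⟩) : Fin n)
      else if h : y ∈ (A ∪ C) \ T then ((C.orderIsoOfFin rfl) ((((A ∪ C) \ T).orderIsoOfFin hST).symm ⟨y, h⟩) : Fin n)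
      else y
    left_inv := by
      intro x
      by_cases hx : x ∈ A
      · simp only [dif_pos hx]
        have hmem : ((T.orderIsoOfFin hT ((A.orderIsoOfFin rfl).symm ⟨x, hx⟩)) : Fin n) ∈ T :=
          (T.orderIsoOfFin hT _).2
        rw [dif_pos hmem]
        simp [← Finset.coe_orderIsoOfFin_apply]
      · by_cases hx' : x ∈ C
        · simp only [dif_neg hx, dif_pos hx']
          have hmem : ((((A ∪ C) \ T).orderIsoOfFin hST ((C.orderIsoOfFin rfl).symm ⟨x, hx'⟩)) : Fin n) ∈ (A ∪ C) \ T :=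
            (((A ∪ C) \ T).orderIsoOfFin hST _).2
          have hnT : ((((A ∪ C) \ T).orderIsoOfFin hST ((C.orderIsoOfFin rfl).symm ⟨x, hx'⟩)) : Fin n) ∉ T :=
            (Finset.mem_sdiff.mp hmem).2
          rw [dif_neg hnT, dif_pos hmem]
          simp [← Finset.coe_orderIsoOfFin_apply]
        · simp only [dif_neg hx, dif_neg hx']
          have h1 : x ∉ T := fun h => by
            rcases Finset.mem_union.mp (hTS h) with h' | h' <;> [exact hx h'; exact hx' h']
          have h2 : x ∉ (A ∪ C) \ T := fun h => by
            rcases Finset.mem_union.mp (Finset.mem_sdiff.mp h).1 with h' | h' <;>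
              [exact hx h'; exact hx' h']
          rw [dif_neg h1, dif_neg h2]
    right_inv := by
      intro y
      by_cases hy : y ∈ T
      · simp only [dif_pos hy]
        have hmem : (((A.orderIsoOfFin rfl) ((T.orderIsoOfFin hT).symm ⟨y, hy⟩)) : Fin n) ∈ A :=
          ((A.orderIsoOfFin rfl) _).2
        rw [dif_pos hmem]
        simp [← Finset.coe_orderIsoOfFin_apply]
      · by_cases hy' : y ∈ (A ∪ C) \ T
        · simp only [dif_neg hy, dif_pos hy']
          have hmem : (((C.orderIsoOfFin rfl) ((((A ∪ C) \ T).orderIsoOfFin hST).symm ⟨y, hy'⟩)) : Fin n) ∈ C :=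
            ((C.orderIsoOfFin rfl) _).2
          have hnA : (((C.orderIsoOfFin rfl) ((((A ∪ C) \ T).orderIsoOfFin hST).symm ⟨y, hy'⟩)) : Fin n) ∉ A :=
            fun h => (Finset.disjoint_left.mp hAC h) hmem
          rw [dif_neg hnA, dif_pos hmem]
          simp [← Finset.coe_orderIsoOfFin_apply]
        · simp only [dif_neg hy, dif_neg hy']
          have h1 : y ∉ A := fun h => by
            by_cases hyT : y ∈ T
            · exact hy hyT
            · exact hy' (Finset.mem_sdiff.mpr ⟨Finset.mem_union_left _ h, hyT⟩)
          have h2 : y ∉ C := fun h => by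
            by_cases hyT : y ∈ T
            · exact hy hyT
            · exact hy' (Finset.mem_sdiff.mpr ⟨Finset.mem_union_right _ h, hyT⟩)
          rw [dif_neg h1, dif_neg h2] }

noncomputable def piPerm (A C T : Finset (Fin n)) : Equiv.Perm (Fin n) :=
  if h : Disjoint A C ∧ T.card = A.card ∧ T ⊆ A ∪ C then piPermAux A C T h.1 h.2.1 h.2.2
  else Equiv.refl _

variable {A C T : Finset (Fin n)}

lemma piPerm_eq_aux (hAC : Disjoint A C) (hT : T.card = A.card) (hTS : T ⊆ A ∪ C) : piPerm A C T = piPermAux A C T hAC hT hTS := by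
  rw [piPerm, dif_pos ⟨hAC, hT, hTS⟩]

lemma piPerm_mem_T (hAC : Disjoint A C) (hT : T.card = A.card) (hTS : T ⊆ A ∪ C) {x : Fin n} (hx : x ∈ A) : piPerm A C T x ∈ T := by
  rw [piPerm_eq_aux hAC hT hTS]
  show (if h : x ∈ A then _ else _) ∈ T
  rw [dif_pos hx]
  exact (T.orderIsoOfFin hT _).2

lemma piPerm_mem_D (hAC : Disjoint A C) (hT : T.card = A.card) (hTS : T ⊆ A ∪ C) {x : Fin n} (hx : x ∈ C) : piPerm A C T x ∈ (A ∪ C) \ T := by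
  rw [piPerm_eq_aux hAC hT hTS]
  show (if h : x ∈ A then _ else _) ∈ (A ∪ C) \ T
  rw [dif_neg (fun h => (Finset.disjoint_left.mp hAC h) hx), dif_pos hx]
  exact (((A ∪ C) \ T).orderIsoOfFin _ _).2

lemma piPerm_symm_mem_A (hAC : Disjoint A C) (hT : T.card = A.card) (hTS : T ⊆ A ∪ C) {y : Fin n} (hy : y ∈ T) : (piPerm A C T).symm y ∈ A := by
  rw [piPerm_eq_aux hAC hT hTS]
  show (if h : y ∈ T then _ else _) ∈ A
  rw [dif_pos hy]
  exact ((A.orderIsoOfFin rfl) _).2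

lemma piPerm_symm_mem_C (hAC : Disjoint A C) (hT : T.card = A.card) (hTS : T ⊆ A ∪ C) {y : Fin n} (hy : y ∈ (A ∪ C) \ T) : (piPerm A C T).symm y ∈ C := by
  rw [piPerm_eq_aux hAC hT hTS]
  show (if h : y ∈ T then _ else _) ∈ C
  rw [dif_neg (Finset.mem_sdiff.mp hy).2, dif_pos hy]
  exact ((C.orderIsoOfFin rfl) _).2

lemma piPerm_image_S (hAC : Disjoint A C) (hT : T.card = A.card) (hTS : T ⊆ A ∪ C) : (A ∪ C).image (piPerm A C T) = A ∪ C := by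
  apply Finset.eq_of_subset_of_card_le
  · intro y hy
    rw [Finset.mem_image] at hy
    obtain ⟨x, hx, rfl⟩ := hy
    rcases Finset.mem_union.mp hx with h | h
    · exact hTS (piPerm_mem_T hAC hT hTS h)
    · exact (Finset.mem_sdiff.mp (piPerm_mem_D hAC hT hTS h)).1
  · rw [Finset.card_image_of_injective _ (piPerm A C T).injective]

lemma piPerm_symm_image_S (hAC : Disjoint A C) (hT : T.card = A.card) (hTS : T ⊆ A ∪ C) : (A ∪ C).image (piPerm A C T).symm = A ∪ C := by
  apply Finset.eq_of_subset_of_card_le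
  · intro y hy
    rw [Finset.mem_image] at hy
    obtain ⟨x, hx, rfl⟩ := hy
    by_cases h : x ∈ T
    · exact Finset.mem_union_left _ (piPerm_symm_mem_A hAC hT hTS h)
    · have : x ∈ (A ∪ C) \ T := Finset.mem_sdiff.mpr ⟨hx, h⟩
      exact Finset.mem_union_right _ (piPerm_symm_mem_C hAC hT hTS this)
  · rw [Finset.card_image_of_injective _ (piPerm A C T).symm.injective]

lemma good_frank {n : ℕ} {A B : Finset (Fin n)} (σ : Equiv.Perm (Fin n))
    (hσ : ∀ a ∈ A, ∀ b ∈ Bᶜ, σ a < σ b) :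
    (∀ x ∈ A, frank ((A ∪ Bᶜ).image σ) (σ x) < A.card) ∧
    (∀ y ∈ Bᶜ, A.card ≤ frank ((A ∪ Bᶜ).image σ) (σ y)) := by
  constructor
  · intro x hx
    have hsub : ((A ∪ Bᶜ).image σ).filter (· < σ x) ⊆ (A.image σ).erase (σ x) := by
      intro w hw
      rw [Finset.mem_filter] at hw
      obtain ⟨hwW, hwlt⟩ := hw
      rw [Finset.mem_image] at hwW
      obtain ⟨z, hz, rfl⟩ := hwW
      rcases Finset.mem_union.mp hz with h | h
      · exact Finset.mem_erase.mpr ⟨ne_of_lt hwlt, Finset.mem_image_of_mem σ h⟩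
      · exact absurd (hσ x hx z h) (fun hc => lt_asymm hwlt hc)
    calc frank ((A ∪ Bᶜ).image σ) (σ x) ≤ ((A.image σ).erase (σ x)).card :=
          Finset.card_le_card hsub
      _ < (A.image σ).card := Finset.card_erase_lt_of_mem (Finset.mem_image_of_mem σ hx)
      _ = A.card := Finset.card_image_of_injective _ σ.injective
  · intro y hy
    have hsub : A.image σ ⊆ ((A ∪ Bᶜ).image σ).filter (· < σ y) := by
      intro w hw
      rw [Finset.mem_image] at hw
      obtain ⟨x, hx, rfl⟩ := hw
      rw [Finset.mem_filter]
      exact ⟨Finset.mem_image_of_mem σ (Finset.mem_union_left _ hx), hσ x hx y hy⟩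
    calc A.card = (A.image σ).card := (Finset.card_image_of_injective _ σ.injective).symm
      _ ≤ _ := Finset.card_le_card hsub

def Tset {n : ℕ} (A B : Finset (Fin n)) (τ : Equiv.Perm (Fin n)) : Finset (Fin n) :=
  (A ∪ Bᶜ).filter (fun x => frank ((A ∪ Bᶜ).image τ) (τ x) < A.card)

lemma Tset_subset {n : ℕ} (A B : Finset (Fin n)) (τ : Equiv.Perm (Fin n)) :
    Tset A B τ ⊆ A ∪ Bᶜ := Finset.filter_subset _ _

lemma Tset_card {n : ℕ} (A B : Finset (Fin n)) (hAB : A ⊆ B) (τ : Equiv.Perm (Fin n)) :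
    (Tset A B τ).card = A.card := by
  have hAC : Disjoint A Bᶜ := by
    rw [Finset.disjoint_left]
    intro x hx hx'
    exact (Finset.mem_compl.mp hx') (hAB hx)
  have himg : (Tset A B τ).image τ =
      ((A ∪ Bᶜ).image τ).filter (fun w => frank ((A ∪ Bᶜ).image τ) w < A.card) := by
    rw [Tset, Finset.filter_image]
  have hcard1 : (Tset A B τ).card = ((Tset A B τ).image τ).card :=
    (Finset.card_image_of_injective _ τ.injective).symm
  rw [hcard1, himg, card_filter_frank_lt]
  rw [Finset.card_image_of_injective _ τ.injective, Finset.card_union_of_disjoint hAC]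
  omega

open scoped Classical in
lemma perm_count {n : ℕ} (A B : Finset (Fin n)) (hAB : A ⊆ B) :
    (univ.filter fun τ : Equiv.Perm (Fin n) => ∀ a ∈ A, ∀ b ∈ Bᶜ, τ a < τ b).card
      * ((A ∪ Bᶜ).card.choose A.card) = n.factorial := by
  have hAC : Disjoint A Bᶜ := by
    rw [Finset.disjoint_left]
    intro x hx hx'
    exact (Finset.mem_compl.mp hx') (hAB hx)
  set G := univ.filter fun τ : Equiv.Perm (Fin n) => ∀ a ∈ A, ∀ b ∈ Bᶜ, τ a < τ b with hG
  have key : (univ : Finset (Equiv.Perm (Fin n))).card =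
      (G ×ˢ (A ∪ Bᶜ).powersetCard A.card).card := by
    apply Finset.card_bij'
      (i := fun τ _ => ((piPerm A Bᶜ (Tset A B τ)).trans τ, Tset A B τ))
      (j := fun p _ => (piPerm A Bᶜ p.2).symm.trans p.1)
    · -- hi : lands in G ×ˢ powersetCard
      intro τ _
      rw [Finset.mem_product]
      constructor
      · rw [hG, Finset.mem_filter]
        refine ⟨Finset.mem_univ _, ?_⟩
        intro x hx y hy
        have hTc := Tset_card A B hAB τ
        have hTs := Tset_subset A B τ
        have h1 : piPerm A Bᶜ (Tset A B τ) x ∈ Tset A B τ := piPerm_mem_T hAC hTc hTs hx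
        have h2 : piPerm A Bᶜ (Tset A B τ) y ∈ (A ∪ Bᶜ) \ Tset A B τ :=
          piPerm_mem_D hAC hTc hTs hy
        rw [Finset.mem_sdiff] at h2
        rw [Tset, Finset.mem_filter] at h1
        have h2' : ¬ frank ((A ∪ Bᶜ).image τ) (τ (piPerm A Bᶜ (Tset A B τ) y)) < A.card := by
          intro hc
          exact h2.2 (Finset.mem_filter.mpr ⟨h2.1, hc⟩)
        exact lt_of_frank_lt (lt_of_lt_of_le h1.2 (le_of_not_gt h2'))
      · rw [Finset.mem_powersetCard]
        exact ⟨Tset_subset A B τ, Tset_card A B hAB τ⟩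
    · intro p _
      exact Finset.mem_univ _
    · -- left inverse
      intro τ _
      ext x
      simp
    · -- right inverse
      intro p hp
      rw [Finset.mem_product] at hp
      obtain ⟨hpG, hpT⟩ := hp
      rw [hG, Finset.mem_filter] at hpG
      rw [Finset.mem_powersetCard] at hpT
      obtain ⟨hTs, hTc⟩ := hpT
      have hTc' : p.2.card = A.card := hTc
      obtain ⟨σ, T⟩ := p
      simp only at hTs hTc' ⊢
      have hσ := hpG.2
      set τ := (piPerm A Bᶜ T).symm.trans σ with hτ
      have hW : (A ∪ Bᶜ).image τ = (A ∪ Bᶜ).image σ := by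
        have : (A ∪ Bᶜ).image τ = ((A ∪ Bᶜ).image (piPerm A Bᶜ T).symm).image σ := by
          rw [Finset.image_image]
          rfl
        rw [this, piPerm_symm_image_S hAC hTc' hTs]
      have hgood := good_frank σ hσ
      have hTT : Tset A B τ = T := by
        ext x
        rw [Tset, Finset.mem_filter, hW]
        constructor
        · rintro ⟨hxS, hxf⟩
          by_contra hxT
          have hxD : x ∈ (A ∪ Bᶜ) \ T := Finset.mem_sdiff.mpr ⟨hxS, hxT⟩
          have : (piPerm A Bᶜ T).symm x ∈ Bᶜ := piPerm_symm_mem_C hAC hTc' hTs hxD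
          have := hgood.2 _ this
          have hτx : τ x = σ ((piPerm A Bᶜ T).symm x) := rfl
          rw [hτx] at hxf
          omega
        · intro hxT
          have hxA : (piPerm A Bᶜ T).symm x ∈ A := piPerm_symm_mem_A hAC hTc' hTs hxT
          have hτx : τ x = σ ((piPerm A Bᶜ T).symm x) := rfl
          exact ⟨hTs hxT, by rw [hτx]; exact hgood.1 _ hxA⟩
      refine Prod.ext ?_ hTT
      simp only
      rw [hTT]
      ext x
      simp [hτ]
  rw [Finset.card_univ, Fintype.card_perm, Fintype.card_fin] at key
  rw [key, Finset.card_product, Finset.card_powersetCard]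


/-- For `A ⊆ B ⊆ [n]`, the number of full chains of `B_n` meeting
the interval `[A, B] = {S : A ⊆ S ⊆ B}` equals `n! / C(n − |B \ A|, |A|)`. -/
theorem chainCount_interval (n : ℕ) (A B : Finset (Fin n)) (hAB : A ⊆ B) :
    (chainCount (Finset.Icc A B) : ℝ) =
      (n.factorial : ℝ) / ((n - (B \ A).card).choose A.card : ℝ) := by
  classical
  have hb : B.card ≤ n := le_trans (Finset.card_le_univ B) (by simp)
  have ha : A.card ≤ B.card := Finset.card_le_card hAB
  have hBA : (B \ A).card = B.card - A.card := Finset.card_sdiff_of_subset hAB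
  have hAC : Disjoint A Bᶜ := by
    rw [Finset.disjoint_left]
    intro x hx hx'
    exact (Finset.mem_compl.mp hx') (hAB hx)
  have hS : (A ∪ Bᶜ).card = A.card + (n - B.card) := by
    rw [Finset.card_union_of_disjoint hAC, Finset.card_compl]
    simp
  have hEq : n - (B \ A).card = (A ∪ Bᶜ).card := by omega
  rw [chainCount_eq_perm n A B, hEq]
  have hkey := perm_count A B hAB
  have hpos : 0 < (A ∪ Bᶜ).card.choose A.card := Nat.choose_pos (by omega)
  rw [eq_div_iff (by exact_mod_cast hpos.ne')]
  exact_mod_cast hkey
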